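/- Let f₁, ..., fₙ : 𝔻 → ℂ be holomorphic functions on the open unit disc 𝔻 with Re(fⱼ(z)) ≤ 0 for all z ∈ 𝔻 and all j, and suppose f₁(z) + f₂(z) + ⋯ + fₙ(z) = (z+1)/(z-1) for all z ∈ 𝔻. Then for each j and all z ∈ 𝔻, fⱼ(z) = i·Im(fⱼ(0)) − Re(fⱼ(0))·(z+1)/(z-1). -/

import Mathlib

open Complex Metric

/-- Maximum principle for the real part: if `Re g ≤ 0` on the unit ball and `Re g z₀ = 0`
at some interior point, then `g` is constant. -/
private lemma aux_const_of_re_zero {g : ℂ → ℂ}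
    (hd : DifferentiableOn ℂ g (ball (0 : ℂ) 1))
    (hre : ∀ z ∈ ball (0 : ℂ) 1, (g z).re ≤ 0)
    {z₀ : ℂ} (hz₀ : z₀ ∈ ball (0 : ℂ) 1) (h0 : (g z₀).re = 0) :
    ∀ z ∈ ball (0 : ℂ) 1, g z = g z₀ := by
  set F : ℂ → ℂ := fun z => Complex.exp (g z) with hF
  have hFd : DifferentiableOn ℂ F (ball (0 : ℂ) 1) :=
    fun z hz => ((hd z hz).hasDerivWithinAt.cexp).differentiableWithinAt
  have hmax : IsMaxOn (norm ∘ F) (ball (0 : ℂ) 1) z₀ := by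
    intro z hz
    simp only [Function.comp_apply, hF, Complex.norm_exp, h0]
    exact Real.exp_le_exp.2 (by simpa [h0] using hre z hz)
  have hconst : Set.EqOn F (Function.const ℂ (F z₀)) (ball (0 : ℂ) 1) :=
    Complex.eqOn_of_isPreconnected_of_isMaxOn_norm (convex_ball _ _).isPreconnected
      isOpen_ball hFd hz₀ hmax
  -- deriv g = 0 on the ball
  have hderiv : ∀ z ∈ ball (0 : ℂ) 1, deriv g z = 0 := by
    intro z hz
    have hgz : DifferentiableAt ℂ g z := hd.differentiableAt (isOpen_ball.mem_nhds hz)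
    have hFz : HasDerivAt F (Complex.exp (g z) * deriv g z) z :=
      (Complex.hasDerivAt_exp (g z)).comp z hgz.hasDerivAt
    have hev : F =ᶠ[nhds z] Function.const ℂ (F z₀) :=
      Filter.eventuallyEq_of_mem (isOpen_ball.mem_nhds hz) hconst
    have : deriv F z = 0 := by
      rw [hev.deriv_eq]; exact deriv_const _ _
    have h2 : Complex.exp (g z) * deriv g z = 0 := by rw [← hFz.deriv, this]
    rcases mul_eq_zero.1 h2 with h | h
    · exact absurd h (Complex.exp_ne_zero _)
    · exact h
  -- conclude constancy on the convex ball
  intro z hz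
  have hfw : ∀ x ∈ ball (0 : ℂ) 1, fderivWithin ℂ g (ball (0 : ℂ) 1) x = 0 := by
    intro x hx
    have h1 : fderivWithin ℂ g (ball (0 : ℂ) 1) x = fderiv ℂ g x :=
      fderivWithin_of_isOpen isOpen_ball hx
    rw [h1]
    refine ContinuousLinearMap.ext_ring ?_
    have := hderiv x hx
    simpa [fderiv_apply_one_eq_deriv] using this
  exact (convex_ball (0 : ℂ) 1).is_const_of_fderivWithin_eq_zero hd hfw hz hz₀

/-- Schwarz-lemma bound: if `g` is holomorphic on the unit ball with `Re g < 0`, then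
`|g z - g 0| ≤ |z| · |g z + conj (g 0)|`. -/
private lemma aux_schwarz {g : ℂ → ℂ}
    (hd : DifferentiableOn ℂ g (ball (0 : ℂ) 1))
    (hre : ∀ z ∈ ball (0 : ℂ) 1, (g z).re < 0) :
    ∀ z ∈ ball (0 : ℂ) 1,
      ‖g z - g 0‖ ≤ ‖z‖ * ‖g z + (starRingEnd ℂ) (g 0)‖ := by
  have h0b : (0 : ℂ) ∈ ball (0 : ℂ) 1 := mem_ball_self one_pos
  set a : ℂ := g 0 with ha
  have hare : a.re < 0 := hre 0 h0b
  have hden : ∀ z ∈ ball (0 : ℂ) 1, g z + (starRingEnd ℂ) a ≠ 0 := by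
    intro z hz h
    have : (g z + (starRingEnd ℂ) a).re < 0 := by
      simp only [Complex.add_re, Complex.conj_re]
      linarith [hre z hz]
    rw [h] at this; simp at this
  set φ : ℂ → ℂ := fun z => (g z - a) / (g z + (starRingEnd ℂ) a) with hφ
  have hφd : DifferentiableOn ℂ φ (ball (0 : ℂ) 1) :=
    (hd.sub_const a).div (hd.add_const _) hden
  have hlt : ∀ z ∈ ball (0 : ℂ) 1,
      ‖g z - a‖ < ‖g z + (starRingEnd ℂ) a‖ := by
    intro z hz
    have h1 : Complex.normSq (g z - a) < Complex.normSq (g z + (starRingEnd ℂ) a) := by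
      simp only [Complex.normSq_apply, Complex.sub_re, Complex.sub_im, Complex.add_re,
        Complex.add_im, Complex.conj_re, Complex.conj_im]
      nlinarith [hre z hz, hare]
    have := Real.sqrt_lt_sqrt (Complex.normSq_nonneg _) h1
    simpa [Complex.norm_def] using this
  have hmaps : Set.MapsTo φ (ball (0 : ℂ) 1) (ball (0 : ℂ) 1) := by
    intro z hz
    rw [mem_ball_zero_iff]
    have hpos : 0 < ‖g z + (starRingEnd ℂ) a‖ :=
      norm_pos_iff.2 (hden z hz)
    simp only [hφ, norm_div]
    exact (div_lt_one hpos).2 (hlt z hz)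
  have hφ0 : φ 0 = 0 := by simp [hφ, ha]
  intro z hz
  have habs : ‖φ z‖ ≤ ‖z‖ :=
    Complex.norm_le_norm_of_mapsTo_ball_self hφd (hmaps.mono_right ball_subset_closedBall) hφ0 (by simpa using mem_ball_zero_iff.1 hz)
  have hpos : 0 < ‖g z + (starRingEnd ℂ) a‖ := norm_pos_iff.2 (hden z hz)
  have : ‖g z - a‖ = ‖φ z‖ * ‖g z + (starRingEnd ℂ) a‖ := by
    rw [hφ]; simp only [norm_div]; field_simp
  rw [this]
  exact mul_le_mul_of_nonneg_right habs hpos.le |>.trans_eq rfl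

/-- Harnack-type lower bound extracted from the Schwarz inequality. -/
private lemma aux_harnack {w a : ℂ} {r : ℝ} (hw : w.re ≤ 0) (ha : a.re ≤ 0)
    (hr0 : 0 ≤ r) (hr1 : r < 1)
    (h : ‖w - a‖ ≤ r * ‖w + (starRingEnd ℂ) a‖) :
    a.re * (1 + r) ≤ w.re * (1 - r) := by
  have hsq : Complex.normSq (w - a) ≤ r ^ 2 * Complex.normSq (w + (starRingEnd ℂ) a) := by
    have h1 : (‖w - a‖) ^ 2 ≤ (r * ‖w + (starRingEnd ℂ) a‖) ^ 2 :=
      pow_le_pow_left₀ (norm_nonneg _) h 2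
    calc Complex.normSq (w - a) = (‖w - a‖) ^ 2 := (Complex.sq_norm _).symm
      _ ≤ (r * ‖w + (starRingEnd ℂ) a‖) ^ 2 := h1
      _ = r ^ 2 * Complex.normSq (w + (starRingEnd ℂ) a) := by
          rw [mul_pow, Complex.sq_norm]
  simp only [Complex.normSq_apply, Complex.sub_re, Complex.sub_im, Complex.add_re,
    Complex.add_im, Complex.conj_re, Complex.conj_im] at hsq
  have hA2 : (w.re - a.re) ^ 2 ≤ (r * (w.re + a.re)) ^ 2 := by
    nlinarith [mul_nonneg (by nlinarith : (0:ℝ) ≤ 1 - r ^ 2) (sq_nonneg (w.im - a.im))]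
  have hB : w.re + a.re ≤ 0 := by linarith
  nlinarith [hA2, mul_nonneg hr0 (neg_nonneg.2 hB)]

/-- Equality case: if additionally the real parts saturate the Harnack bound, the
imaginary parts agree. -/
private lemma aux_harnack_eq {w a : ℂ} {r : ℝ} (hr0 : 0 ≤ r) (hr1 : r < 1)
    (h : ‖w - a‖ ≤ r * ‖w + (starRingEnd ℂ) a‖)
    (hx : w.re * (1 - r) = a.re * (1 + r)) : w.im = a.im := by
  have hsq : Complex.normSq (w - a) ≤ r ^ 2 * Complex.normSq (w + (starRingEnd ℂ) a) := by
    have h1 : (‖w - a‖) ^ 2 ≤ (r * ‖w + (starRingEnd ℂ) a‖) ^ 2 :=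
      pow_le_pow_left₀ (norm_nonneg _) h 2
    calc Complex.normSq (w - a) = (‖w - a‖) ^ 2 := (Complex.sq_norm _).symm
      _ ≤ (r * ‖w + (starRingEnd ℂ) a‖) ^ 2 := h1
      _ = r ^ 2 * Complex.normSq (w + (starRingEnd ℂ) a) := by
          rw [mul_pow, Complex.sq_norm]
  simp only [Complex.normSq_apply, Complex.sub_re, Complex.sub_im, Complex.add_re,
    Complex.add_im, Complex.conj_re, Complex.conj_im] at hsq
  have hA : w.re - a.re = r * (w.re + a.re) := by linarith
  have hA2 : (w.re - a.re) ^ 2 = (r * (w.re + a.re)) ^ 2 := by rw [hA]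
  have him : (w.im - a.im) ^ 2 * (1 - r ^ 2) ≤ 0 := by nlinarith
  have h1 : 0 < 1 - r ^ 2 := by nlinarith
  have h2 : (w.im - a.im) ^ 2 ≤ 0 := by nlinarith
  have h3 : w.im - a.im = 0 := by
    have h4 := le_antisymm h2 (sq_nonneg _)
    exact sq_eq_zero_iff.mp h4
  linarith

/-- If holomorphic functions `f 1, ..., f n` on the unit disc have nonpositive real part and
sum to `(z+1)/(z-1)`, then each `f j z = i·Im(f j 0) - Re(f j 0)·(z+1)/(z-1)`. -/
theorem stmt_0 (n : ℕ) (f : Fin n → ℂ → ℂ)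
    (hdiff : ∀ j, DifferentiableOn ℂ (f j) (ball (0 : ℂ) 1))
    (hre : ∀ j, ∀ z ∈ ball (0 : ℂ) 1, (f j z).re ≤ 0)
    (hsum : ∀ z ∈ ball (0 : ℂ) 1, ∑ j, f j z = (z + 1) / (z - 1)) :
    ∀ j, ∀ z ∈ ball (0 : ℂ) 1,
      f j z = Complex.I * ((f j 0).im : ℂ) - ((f j 0).re : ℂ) * ((z + 1) / (z - 1)) := by
  intro j
  have h0b : (0 : ℂ) ∈ ball (0 : ℂ) 1 := mem_ball_self one_pos
  have hrb : ∀ r : ℝ, 0 < r → r < 1 → ((r : ℂ) ∈ ball (0 : ℂ) 1) := by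
    intro r h0 h1
    rw [mem_ball_zero_iff]
    simpa [Complex.norm_real, abs_of_pos h0] using h1
  -- sum of real parts at 0 is -1
  have hsum0 : ∑ k, (f k 0).re = -1 := by
    have := hsum 0 h0b
    have h2 : (∑ k, f k 0).re = (((0 : ℂ) + 1) / ((0 : ℂ) - 1)).re := by rw [this]
    rw [Complex.re_sum] at h2
    norm_num at h2
    convert h2 using 2
  -- real part of ζ on positive reals
  have hζre : ∀ r : ℝ, r < 1 → ((((r : ℂ) + 1) / ((r : ℂ) - 1)).re) = (r + 1) / (r - 1) := by
    intro r h1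
    have hne : (r : ℂ) - 1 ≠ 0 := by
      intro h
      have : (r : ℂ) = 1 := by linear_combination h
      have : r = 1 := by exact_mod_cast this
      linarith
    have : (((r : ℂ) + 1) / ((r : ℂ) - 1)) = (((r + 1) / (r - 1) : ℝ) : ℂ) := by
      push_cast
      rfl
    rw [this, Complex.ofReal_re]
  -- Per-index Harnack inequality at real points
  have hineq : ∀ r : ℝ, 0 < r → r < 1 → ∀ k,
      (f k 0).re * (1 + r) ≤ (f k ((r : ℝ) : ℂ)).re * (1 - r) := by
    intro r h0 h1 k
    by_cases hex : ∃ z₀ ∈ ball (0 : ℂ) 1, (f k z₀).re = 0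
    · obtain ⟨z₀, hz₀, hz₀0⟩ := hex
      have hc := aux_const_of_re_zero (hdiff k) (hre k) hz₀ hz₀0
      have e1 : f k 0 = f k z₀ := hc 0 h0b
      have e2 : f k ((r : ℝ) : ℂ) = f k z₀ := hc _ (hrb r h0 h1)
      rw [e1, e2, hz₀0]
      simp
    · push_neg at hex
      have hlt : ∀ z ∈ ball (0 : ℂ) 1, (f k z).re < 0 :=
        fun z hz => lt_of_le_of_ne (hre k z hz) (hex z hz)
      have hs := aux_schwarz (hdiff k) hlt ((r : ℝ) : ℂ) (hrb r h0 h1)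
      rw [Complex.norm_real, Real.norm_eq_abs, abs_of_pos h0] at hs
      exact aux_harnack (hre k _ (hrb r h0 h1)) (hre k 0 h0b) h0.le h1 hs
  -- Equality for each index at real points, from the sum condition
  have heq : ∀ r : ℝ, 0 < r → r < 1 →
      (f j ((r : ℝ) : ℂ)).re * (1 - r) = (f j 0).re * (1 + r) := by
    intro r h0 h1
    have hsr : ∑ k, (f k ((r : ℝ) : ℂ)).re = (r + 1) / (r - 1) := by
      have := hsum ((r : ℝ) : ℂ) (hrb r h0 h1)
      have h2 : (∑ k, f k ((r : ℝ) : ℂ)).re = ((((r : ℝ) : ℂ) + 1) / (((r : ℝ) : ℂ) - 1)).re := by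
        rw [this]
      rw [Complex.re_sum] at h2
      rw [h2, hζre r h1]
    have hsum_eq : ∑ k, (f k 0).re * (1 + r) = ∑ k, (f k ((r : ℝ) : ℂ)).re * (1 - r) := by
      rw [← Finset.sum_mul, ← Finset.sum_mul, hsum0, hsr]
      have hne : r - 1 ≠ 0 := by intro h; linarith
      field_simp
      ring
    have := (Finset.sum_eq_sum_iff_of_le
      (fun k _ => hineq r h0 h1 k)).1 hsum_eq j (Finset.mem_univ j)
    linarith [this]
  -- main case split
  by_cases hex : ∃ z₀ ∈ ball (0 : ℂ) 1, (f j z₀).re = 0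
  · obtain ⟨z₀, hz₀, hz₀0⟩ := hex
    have hc := aux_const_of_re_zero (hdiff j) (hre j) hz₀ hz₀0
    intro z hz
    have e1 : f j 0 = f j z₀ := hc 0 h0b
    have e2 : f j z = f j z₀ := hc z hz
    have hre0 : (f j 0).re = 0 := by rw [e1, hz₀0]
    rw [e2, ← e1, hre0]
    apply Complex.ext <;> simp [hre0]
  · push_neg at hex
    have hlt : ∀ z ∈ ball (0 : ℂ) 1, (f j z).re < 0 :=
      fun z hz => lt_of_le_of_ne (hre j z hz) (hex z hz)
    -- pointwise equality at real points
    have hpt : ∀ r : ℝ, 0 < r → r < 1 →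
        f j ((r : ℝ) : ℂ) =
          Complex.I * ((f j 0).im : ℂ) - ((f j 0).re : ℂ) * ((((r : ℝ) : ℂ) + 1) / (((r : ℝ) : ℂ) - 1)) := by
      intro r h0 h1
      have hs := aux_schwarz (hdiff j) hlt ((r : ℝ) : ℂ) (hrb r h0 h1)
      rw [Complex.norm_real, Real.norm_eq_abs, abs_of_pos h0] at hs
      have hxeq := heq r h0 h1
      have him : (f j ((r : ℝ) : ℂ)).im = (f j 0).im :=
        aux_harnack_eq h0.le h1 hs hxeq
      have hzre := hζre r h1
      have hne : r - 1 ≠ 0 := by intro h; linarith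
      have hxval : (f j ((r : ℝ) : ℂ)).re = (f j 0).re * (1 + r) / (1 - r) := by
        have h1r : (1 : ℝ) - r ≠ 0 := by intro h; linarith
        field_simp at hxeq ⊢
        linarith [hxeq]
      apply Complex.ext
      · simp only [Complex.sub_re, Complex.mul_re, Complex.I_re, Complex.ofReal_re,
          Complex.I_im, Complex.ofReal_im, Complex.mul_im]
        rw [hzre, hxval]
        have himz : ((((r : ℝ) : ℂ) + 1) / (((r : ℝ) : ℂ) - 1)).im = 0 := by
          have : (((r : ℝ) : ℂ) + 1) / (((r : ℝ) : ℂ) - 1) = (((r + 1) / (r - 1) : ℝ) : ℂ) := by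
            push_cast; rfl
          rw [this, Complex.ofReal_im]
        rw [himz]
        have h1r : (1 : ℝ) - r ≠ 0 := by intro h; linarith
        field_simp
        ring
      · simp only [Complex.sub_im, Complex.mul_im, Complex.I_re, Complex.ofReal_re,
          Complex.I_im, Complex.ofReal_im, Complex.mul_re]
        have himz : ((((r : ℝ) : ℂ) + 1) / (((r : ℝ) : ℂ) - 1)).im = 0 := by
          have : (((r : ℝ) : ℂ) + 1) / (((r : ℝ) : ℂ) - 1) = (((r + 1) / (r - 1) : ℝ) : ℂ) := by
            push_cast; rfl
          rw [this, Complex.ofReal_im]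
        rw [him, himz]
        ring
    -- identity theorem
    set G : ℂ → ℂ := fun z =>
      Complex.I * ((f j 0).im : ℂ) - ((f j 0).re : ℂ) * ((z + 1) / (z - 1)) with hG
    have hGd : DifferentiableOn ℂ G (ball (0 : ℂ) 1) := by
      apply DifferentiableOn.sub (differentiableOn_const _)
      apply DifferentiableOn.mul (differentiableOn_const _)
      apply DifferentiableOn.div
      · exact (differentiableOn_id).add_const 1
      · exact (differentiableOn_id).sub_const 1
      · intro z hz
        intro h
        have hz1 : z = 1 := by linear_combination h
        rw [mem_ball_zero_iff, hz1] at hz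
        norm_num at hz
    have hfa : AnalyticOnNhd ℂ (f j) (ball (0 : ℂ) 1) :=
      (hdiff j).analyticOnNhd isOpen_ball
    have hGa : AnalyticOnNhd ℂ G (ball (0 : ℂ) 1) := hGd.analyticOnNhd isOpen_ball
    have hhalf : ((1 / 2 : ℝ) : ℂ) ∈ ball (0 : ℂ) 1 := hrb (1 / 2) (by norm_num) (by norm_num)
    have hfreq : ∃ᶠ z in nhdsWithin ((1 / 2 : ℝ) : ℂ) {((1 / 2 : ℝ) : ℂ)}ᶜ, f j z = G z := by
      have htend : Filter.Tendsto (fun x : ℝ => (x : ℂ))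
          (nhdsWithin (1 / 2 : ℝ) {(1 / 2 : ℝ)}ᶜ)
          (nhdsWithin ((1 / 2 : ℝ) : ℂ) {((1 / 2 : ℝ) : ℂ)}ᶜ) := by
        rw [tendsto_nhdsWithin_iff]
        constructor
        · exact (Complex.continuous_ofReal.tendsto _).mono_left nhdsWithin_le_nhds
        · filter_upwards [self_mem_nhdsWithin] with x hx
          simp only [Set.mem_compl_iff, Set.mem_singleton_iff] at hx ⊢
          intro h
          exact hx (by exact_mod_cast h)
      have hev : ∀ᶠ x in nhdsWithin (1 / 2 : ℝ) {(1 / 2 : ℝ)}ᶜ, f j ((x : ℝ) : ℂ) = G ((x : ℝ) : ℂ) := by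
        have hIoo : ∀ᶠ x in nhdsWithin (1 / 2 : ℝ) {(1 / 2 : ℝ)}ᶜ, x ∈ Set.Ioo (0 : ℝ) 1 := by
          apply Filter.Eventually.filter_mono nhdsWithin_le_nhds
          exact Ioo_mem_nhds (by norm_num) (by norm_num)
        filter_upwards [hIoo] with x hx
        exact hpt x hx.1 hx.2
      exact htend.frequently hev.frequently
    have := hfa.eqOn_of_preconnected_of_frequently_eq hGa
      (convex_ball (0 : ℂ) 1).isPreconnected hhalf hfreq
    intro z hz
    exact this hz
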